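/- arXiv:2106.02073 — 3 statements merged into one kernel-verified Lean document; each statement's English description precedes it below -/
import Mathlib

section
/- Let $\omega_1, \dots, \omega_{C-1}$ be the nonzero singular values of the SNR matrix $\Sigma_W^{-1/2}\bar{M}$ of a feature matrix $\bar{H}$ on the zero-global-mean central path with $\lambda = 0$. Then the MSE loss of the least-squares classifier equals $\mathcal{L} = \frac{1}{2}\sum_{j=1}^{C-1}\frac{1}{\omega_j^2 + C}$. -/
open Matrix Finset

private lemma inv_key' (P C K : ℕ) (c : ℝ)
    (SigW S : Matrix (Fin P) (Fin P) ℝ)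
    (M : Matrix (Fin P) (Fin C) ℝ)
    (U : Matrix (Fin P) (Fin K) ℝ) (hU : Uᵀ * U = 1)
    (V : Matrix (Fin C) (Fin K) ℝ) (hV : Vᵀ * V = 1)
    (D E : Matrix (Fin K) (Fin K) ℝ)
    (hWSS : SigW * (S * S) = 1)
    (hMS : Mᵀ * S = V * (D * Uᵀ))
    (hM : M = SigW * (S * (U * (D * Vᵀ))))
    (hdiagE : c • (D * (D * ((1 : Matrix (Fin K) (Fin K) ℝ) - E))) = E) :
    (SigW + c • (M * Mᵀ)) * (S * (((1 : Matrix (Fin P) (Fin P) ℝ) - U * (E * Uᵀ)) * S)) = 1 := by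
  have hU' : ∀ {k : ℕ} (X : Matrix (Fin K) (Fin k) ℝ), Uᵀ * (U * X) = X := fun X => by
    rw [← Matrix.mul_assoc, hU, Matrix.one_mul]
  have hV' : ∀ {k : ℕ} (X : Matrix (Fin K) (Fin k) ℝ), Vᵀ * (V * X) = X := fun X => by
    rw [← Matrix.mul_assoc, hV, Matrix.one_mul]
  have hMS' : ∀ {k : ℕ} (X : Matrix (Fin P) (Fin k) ℝ),
      Mᵀ * (S * X) = V * (D * (Uᵀ * X)) := fun X => by
    rw [← Matrix.mul_assoc, hMS, Matrix.mul_assoc, Matrix.mul_assoc]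
  have hMV : ∀ {k : ℕ} (X : Matrix (Fin K) (Fin k) ℝ),
      M * (V * X) = SigW * (S * (U * (D * X))) := fun X => by
    rw [hM]; simp only [Matrix.mul_assoc, hV']
  have hdiagE2 : ∀ (X : Matrix (Fin K) (Fin P) ℝ),
      c • (D * (D * X)) - c • (D * (D * (E * X))) = E * X := fun X => by
    have h := congrArg (· * X) hdiagE
    simpa only [Matrix.smul_mul, Matrix.mul_assoc, Matrix.sub_mul, Matrix.one_mul,
      Matrix.mul_sub, Matrix.mul_one, smul_sub] using h
  have key0 : c • (SigW * (S * (U * (D * (D * (Uᵀ * S)))))) -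
      c • (SigW * (S * (U * (D * (D * (E * (Uᵀ * S))))))) =
      SigW * (S * (U * (E * (Uᵀ * S)))) := by
    have h := congrArg (fun Y => SigW * (S * (U * Y))) (hdiagE2 (Uᵀ * S))
    simpa only [Matrix.mul_sub, Matrix.mul_smul] using h
  calc (SigW + c • (M * Mᵀ)) * (S * (((1 : Matrix (Fin P) (Fin P) ℝ) - U * (E * Uᵀ)) * S))
      = SigW * (S * (S - U * (E * (Uᵀ * S)))) +
          c • (M * (Mᵀ * (S * (S - U * (E * (Uᵀ * S)))))) := by
        simp only [Matrix.add_mul, Matrix.smul_mul, Matrix.mul_assoc, Matrix.sub_mul,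
          Matrix.one_mul]
    _ = SigW * (S * (S - U * (E * (Uᵀ * S)))) +
          c • (M * (V * (D * (Uᵀ * S)) - V * (D * (E * (Uᵀ * S))))) := by
        rw [hMS']
        congr 3
        simp only [Matrix.mul_sub, hU']
    _ = 1 - SigW * (S * (U * (E * (Uᵀ * S)))) +
          (c • (SigW * (S * (U * (D * (D * (Uᵀ * S)))))) -
           c • (SigW * (S * (U * (D * (D * (E * (Uᵀ * S)))))))) := by
        rw [Matrix.mul_sub M, hMV, hMV, smul_sub, Matrix.mul_sub S, Matrix.mul_sub SigW, hWSS]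
    _ = 1 := by rw [key0, sub_add_cancel]

/-- Spectral representation of the MSE loss of the least-squares
classifier on the zero-global-mean central path (`λ = 0`):
`L = (1/2) ∑_j 1/(ω_j² + C)` where `ω_j` are the nonzero singular values of the
SNR matrix `Σ_W^{-1/2} M̄`. -/
theorem mse_loss_spectral_representation
    (P C : ℕ) (hC : 0 < C) (hPC : C ≤ P)
    (SigW : Matrix (Fin P) (Fin P) ℝ) (hpd : SigW.PosDef)
    (M : Matrix (Fin P) (Fin C) ℝ)
    (hM1 : M.mulVec (fun _ => (1 : ℝ)) = 0)
    -- `S` is the inverse positive-definite square root `Σ_W^{-1/2}`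
    (S : Matrix (Fin P) (Fin P) ℝ)
    (hS : S = (hpd.inv).posSemidef.1.eigenvectorUnitary *
      Matrix.diagonal (Real.sqrt ∘ (hpd.inv).posSemidef.1.eigenvalues) *
      (star (hpd.inv).posSemidef.1.eigenvectorUnitary : Matrix (Fin P) (Fin P) ℝ))
    -- SVD of the SNR matrix with nonzero singular values ω
    (ω : Fin (C - 1) → ℝ) (hω : ∀ j, 0 < ω j)
    (U : Matrix (Fin P) (Fin (C - 1)) ℝ) (hU : Uᵀ * U = 1)
    (V : Matrix (Fin C) (Fin (C - 1)) ℝ) (hV : Vᵀ * V = 1)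
    (hSVD : S * M = U * Matrix.diagonal ω * Vᵀ)
    -- total covariance, least-squares classifier and the centering matrix Φ
    (SigT : Matrix (Fin P) (Fin P) ℝ)
    (hSigT : SigT = SigW + ((1 : ℝ) / C) • (M * Mᵀ))
    (WLS : Matrix (Fin C) (Fin P) ℝ)
    (hWLS : WLS = ((1 : ℝ) / C) • Mᵀ * SigT⁻¹)
    (Φ : Matrix (Fin C) (Fin C) ℝ)
    (hΦ : Φ = (1 : Matrix (Fin C) (Fin C) ℝ) - ((1 : ℝ) / C) • Matrix.of (fun _ _ => (1 : ℝ))) :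
    (1 / (2 * C)) * (∑ k : Fin C, ∑ c : Fin C, ((WLS * M) k c - Φ k c) ^ 2)
      + (1 / 2) * Matrix.trace (WLS * SigW * WLSᵀ)
    = (1 / 2) * ∑ j : Fin (C - 1), 1 / ((ω j) ^ 2 + C) := by
  have hCpos : (0:ℝ) < C := by exact_mod_cast hC
  have hC0 : (C:ℝ) ≠ 0 := ne_of_gt hCpos
  have hden : ∀ j : Fin (C-1), (ω j)^2 + (C:ℝ) ≠ 0 := fun j => by positivity
  set D : Matrix (Fin (C-1)) (Fin (C-1)) ℝ := Matrix.diagonal ω with hD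
  set E : Matrix (Fin (C-1)) (Fin (C-1)) ℝ :=
    Matrix.diagonal (fun j => (ω j)^2 / ((ω j)^2 + C)) with hE
  set Fm : Matrix (Fin (C-1)) (Fin (C-1)) ℝ :=
    Matrix.diagonal (fun j => ω j / ((ω j)^2 + C)) with hFm
  -- S basic facts
  have hSsym : Sᵀ = S := by
    have h : Sᴴ = S := by
      rw [hS]; simp [Matrix.star_eq_conjTranspose, Matrix.mul_assoc]
    simpa [Matrix.conjTranspose_eq_transpose_of_trivial] using h
  have hSS : S * S = SigW⁻¹ := by
    have hQ := Unitary.coe_star_mul_self (hpd.inv).posSemidef.1.eigenvectorUnitary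
    have hDD : Matrix.diagonal (Real.sqrt ∘ (hpd.inv).posSemidef.1.eigenvalues) *
        Matrix.diagonal (Real.sqrt ∘ (hpd.inv).posSemidef.1.eigenvalues) =
        Matrix.diagonal (RCLike.ofReal ∘ (hpd.inv).posSemidef.1.eigenvalues) := by
      rw [Matrix.diagonal_mul_diagonal]
      congr 1; funext i
      simp [Real.mul_self_sqrt ((hpd.inv).posSemidef.eigenvalues_nonneg i)]
    conv_rhs => rw [(hpd.inv).posSemidef.1.spectral_theorem, Unitary.conjStarAlgAut_apply]
    rw [hS, ← hDD]
    simp only [Matrix.mul_assoc]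
    rw [← Matrix.mul_assoc _ ((hpd.inv).posSemidef.1.eigenvectorUnitary : Matrix (Fin P) (Fin P) ℝ), hQ, Matrix.one_mul]
  have hdW : IsUnit SigW.det := isUnit_iff_ne_zero.mpr hpd.det_pos.ne'
  have hWSS : SigW * (S * S) = 1 := by rw [hSS]; exact Matrix.mul_nonsing_inv _ hdW
  have hdS : IsUnit S.det := by
    have h1 : (SigW⁻¹).det ≠ 0 := (hpd.inv).det_pos.ne'
    have h2 : S.det * S.det = (SigW⁻¹).det := by rw [← det_mul, hSS]
    exact isUnit_iff_ne_zero.mpr (fun h => h1 (by rw [← h2, h, mul_zero]))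
  have hSinv1 : S⁻¹ = SigW * S := Matrix.inv_eq_left_inv (by
    rw [← Matrix.mul_assoc] at hWSS; exact hWSS)
  have hSWS : S * (SigW * S) = 1 := by
    rw [← hSinv1]; exact Matrix.mul_nonsing_inv _ hdS
  have hSWS' : ∀ {k : ℕ} (X : Matrix (Fin P) (Fin k) ℝ),
      S * (SigW * (S * X)) = X := fun X => by
    rw [← Matrix.mul_assoc, ← Matrix.mul_assoc, Matrix.mul_assoc S SigW S, hSWS, Matrix.one_mul]
  -- SVD rearrangements
  have hSM : S * M = U * (D * Vᵀ) := by rw [hSVD, Matrix.mul_assoc]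
  have hMS : Mᵀ * S = V * (D * Uᵀ) := by
    have h := congrArg Matrix.transpose hSM
    simp only [Matrix.transpose_mul, Matrix.transpose_transpose, hD,
      Matrix.diagonal_transpose, hSsym] at h
    rw [h, hD, Matrix.mul_assoc]
  have hWSS' : ∀ {k : ℕ} (X : Matrix (Fin P) (Fin k) ℝ),
      SigW * (S * (S * X)) = X := fun X => by
    rw [← Matrix.mul_assoc, ← Matrix.mul_assoc, Matrix.mul_assoc SigW S S, hWSS, Matrix.one_mul]
  have hM : M = SigW * (S * (U * (D * Vᵀ))) := by
    rw [← hSM]; exact (hWSS' M).symm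
  have hU' : ∀ {k : ℕ} (X : Matrix (Fin (C-1)) (Fin k) ℝ), Uᵀ * (U * X) = X := fun X => by
    rw [← Matrix.mul_assoc, hU, Matrix.one_mul]
  have hV' : ∀ {k : ℕ} (X : Matrix (Fin (C-1)) (Fin k) ℝ), Vᵀ * (V * X) = X := fun X => by
    rw [← Matrix.mul_assoc, hV, Matrix.one_mul]
  have hMS' : ∀ {k : ℕ} (X : Matrix (Fin P) (Fin k) ℝ),
      Mᵀ * (S * X) = V * (D * (Uᵀ * X)) := fun X => by
    rw [← Matrix.mul_assoc, hMS, Matrix.mul_assoc, Matrix.mul_assoc]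
  -- diagonal identities
  have h1E : (1 : Matrix (Fin (C-1)) (Fin (C-1)) ℝ) - E =
      Matrix.diagonal (fun j => (C:ℝ) / ((ω j)^2 + C)) := by
    rw [hE, ← Matrix.diagonal_one, Matrix.diagonal_sub]
    congr 1; funext j; field_simp; ring
  have hdiagE : ((1:ℝ)/C) • (D * (D * ((1 : Matrix (Fin (C-1)) (Fin (C-1)) ℝ) - E))) = E := by
    rw [h1E, hD, hE, Matrix.diagonal_mul_diagonal, Matrix.diagonal_mul_diagonal,
      ← Matrix.diagonal_smul]
    refine congrArg _ (funext fun j => ?_)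
    have := hden j
    simp only [Pi.smul_apply, smul_eq_mul]
    field_simp
  have hdiagF : ((1:ℝ)/C) • (D * ((1 : Matrix (Fin (C-1)) (Fin (C-1)) ℝ) - E)) = Fm := by
    rw [h1E, hD, hFm, Matrix.diagonal_mul_diagonal, ← Matrix.diagonal_smul]
    refine congrArg _ (funext fun j => ?_)
    have := hden j
    simp only [Pi.smul_apply, smul_eq_mul]
    field_simp
  have hFD : Fm * D = E := by
    rw [hFm, hD, hE, Matrix.diagonal_mul_diagonal]
    refine congrArg _ (funext fun j => ?_)
    have := hden j
    field_simp
  -- the inverse of SigT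
  have hSigTinv : SigT⁻¹ = S * (((1 : Matrix (Fin P) (Fin P) ℝ) - U * (E * Uᵀ)) * S) := by
    apply Matrix.inv_eq_right_inv
    rw [hSigT]
    exact inv_key' P C (C-1) ((1:ℝ)/C) SigW S M U hU V hV D E hWSS hMS hM hdiagE
  -- closed form of WLS
  have hWLS2 : WLS = V * (Fm * (Uᵀ * S)) := by
    rw [hWLS, hSigTinv, Matrix.smul_mul, hMS']
    have hUB : Uᵀ * (((1 : Matrix (Fin P) (Fin P) ℝ) - U * (E * Uᵀ)) * S) =
        ((1 : Matrix (Fin (C-1)) (Fin (C-1)) ℝ) - E) * (Uᵀ * S) := by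
      rw [Matrix.sub_mul, Matrix.one_mul, Matrix.mul_sub, Matrix.sub_mul, Matrix.one_mul]
      congr 1
      simp only [Matrix.mul_assoc, hU']
    rw [hUB, ← Matrix.mul_assoc D, ← hdiagF]
    simp only [Matrix.mul_smul, Matrix.smul_mul, Matrix.mul_assoc]
  -- WLS * M
  have hWM : WLS * M = V * (E * Vᵀ) := by
    rw [hWLS2, Matrix.mul_assoc, Matrix.mul_assoc, Matrix.mul_assoc Uᵀ S M, hSM, hU',
      ← Matrix.mul_assoc Fm D, hFD]
  -- sum over V c j is zero
  have hVsum : ∀ j, ∑ cc, V cc j = 0 := by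
    have h0 : (U * (D * Vᵀ)).mulVec (fun _ => (1:ℝ)) = 0 := by
      rw [← hSM, ← Matrix.mulVec_mulVec, hM1, Matrix.mulVec_zero]
    have h1 : (D * Vᵀ).mulVec (fun _ => (1:ℝ)) = 0 := by
      rw [← hU' (D * Vᵀ), ← Matrix.mulVec_mulVec, h0, Matrix.mulVec_zero]
    intro j
    have h2 := congrFun h1 j
    simp [hD, Matrix.mulVec, dotProduct, Matrix.mul_apply, Matrix.diagonal,
      ← Finset.mul_sum] at h2
    rcases h2 with h | h
    · exact absurd h (hω j).ne'
    · exact h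
  -- Φ = V * Vᵀ
  have hΦV : Φ = V * Vᵀ := by
    set u : Matrix (Fin C) (Fin 1) ℝ := Matrix.of (fun _ _ => (Real.sqrt C)⁻¹) with hu
    have hss : (Real.sqrt C)⁻¹ * (Real.sqrt C)⁻¹ = (C:ℝ)⁻¹ := by
      rw [← mul_inv, Real.mul_self_sqrt hCpos.le]
    have huu : uᵀ * u = 1 := by
      ext i j
      fin_cases i; fin_cases j
      simp [hu, Matrix.mul_apply, hss, Matrix.one_apply]
      field_simp
    have huV : uᵀ * V = 0 := by
      ext i j
      simp [hu, Matrix.mul_apply, ← Finset.mul_sum, hVsum j]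
    have hVu : Vᵀ * u = 0 := by
      ext i j
      simp [hu, Matrix.mul_apply, ← Finset.sum_mul, hVsum i]
    have huuT : u * uᵀ = ((1 : ℝ)/C) • Matrix.of (fun _ _ => (1:ℝ)) := by
      ext i j
      simp [hu, Matrix.mul_apply, hss, div_eq_mul_inv]
    have hblock : Matrix.fromRows Vᵀ uᵀ * Matrix.fromCols V u = 1 := by
      rw [fromRows_mul_fromCols, hV, huu, huV, hVu, Matrix.fromBlocks_one]
    have e : Fin C ≃ Fin (C-1) ⊕ Fin 1 :=
      (finCongr (by omega : C = (C-1) + 1)).trans finSumFinEquiv.symm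
    have h2 := (fromCols_mul_fromRows_eq_one_comm e V u Vᵀ uᵀ).mpr hblock
    rw [fromCols_mul_fromRows, huuT] at h2
    rw [hΦ, ← h2]
    abel
  -- trace conjugation helper
  have htraceV : ∀ (Z : Matrix (Fin (C-1)) (Fin (C-1)) ℝ),
      Matrix.trace (V * (Z * Vᵀ)) = Matrix.trace Z := fun Z => by
    rw [Matrix.trace_mul_comm, Matrix.mul_assoc, hV, Matrix.mul_one]
  -- transpose of WLS
  have hFmT : Fmᵀ = Fm := by rw [hFm, Matrix.diagonal_transpose]
  have hWLST : WLSᵀ = S * (U * (Fm * Vᵀ)) := by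
    rw [hWLS2]
    simp only [Matrix.transpose_mul, Matrix.transpose_transpose, hSsym, hFmT, Matrix.mul_assoc]
  -- trace term
  have htr2 : Matrix.trace (WLS * SigW * WLSᵀ) = ∑ j, (ω j / ((ω j)^2 + C))^2 := by
    have hprod : WLS * SigW * WLSᵀ = V * ((Fm * Fm) * Vᵀ) := by
      rw [hWLST, hWLS2]
      simp only [Matrix.mul_assoc]
      rw [hSWS', hU', ← Matrix.mul_assoc Fm Fm]
    rw [hprod, htraceV, hFm, Matrix.diagonal_mul_diagonal, Matrix.trace_diagonal]
    exact Finset.sum_congr rfl (fun j _ => (pow_two _).symm)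
  -- Frobenius term
  have htrAAT : ∀ (A : Matrix (Fin C) (Fin C) ℝ),
      Matrix.trace (A * Aᵀ) = ∑ k, ∑ cc, (A k cc)^2 := fun A => by
    simp [Matrix.trace, Matrix.mul_apply, Matrix.diag, sq]
  have hA : WLS * M - Φ = V * ((E - 1) * Vᵀ) := by
    rw [hWM, hΦV, ← Matrix.mul_sub]
    congr 1
    rw [Matrix.sub_mul, Matrix.one_mul]
  have hE1T : (E - 1)ᵀ = E - 1 := by
    rw [Matrix.transpose_sub, Matrix.transpose_one, hE, Matrix.diagonal_transpose]
  have hE1diag : E - 1 = Matrix.diagonal (fun j => (ω j)^2 / ((ω j)^2 + C) - 1) := by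
    rw [hE, ← Matrix.diagonal_one, Matrix.diagonal_sub]
  have hfrob : ∑ k, ∑ cc, ((WLS * M) k cc - Φ k cc)^2
      = ∑ j, ((ω j)^2 / ((ω j)^2 + C) - 1)^2 := by
    have h1 : ∑ k, ∑ cc, ((WLS * M) k cc - Φ k cc)^2
        = ∑ k, ∑ cc, ((WLS * M - Φ) k cc)^2 := by
      simp [Matrix.sub_apply]
    rw [h1, ← htrAAT, hA]
    have hAT : (V * ((E - 1) * Vᵀ))ᵀ = V * ((E - 1) * Vᵀ) := by
      simp only [Matrix.transpose_mul, Matrix.transpose_transpose, hE1T, Matrix.mul_assoc]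
    rw [hAT]
    have : V * ((E - 1) * Vᵀ) * (V * ((E - 1) * Vᵀ)) = V * (((E-1) * (E-1)) * Vᵀ) := by
      simp only [Matrix.mul_assoc]
      rw [hV', ← Matrix.mul_assoc (E-1) (E-1)]
    rw [this, htraceV, hE1diag, Matrix.diagonal_mul_diagonal, Matrix.trace_diagonal]
    exact Finset.sum_congr rfl (fun j _ => (pow_two _).symm)
  -- final arithmetic
  rw [hfrob, htr2, Finset.mul_sum, Finset.mul_sum, Finset.mul_sum, ← Finset.sum_add_distrib]
  refine Finset.sum_congr rfl (fun j _ => ?_)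
  have hj := hden j
  field_simp
  ring
end

section
/- Let $\omega_1, \dots, \omega_{C-1}: [0,\infty) \to (0,\infty)$ each satisfy $c_1\log(\omega_j(t)) + c_2\,\omega_j(t)^2 + c_3\,\omega_j(t)^4 = a_j + t$ with common positive constants $c_1, c_2, c_3$ and possibly different constants $a_j$. Then $\lim_{t\to\infty}\frac{\max_j \omega_j(t)}{\min_j \omega_j(t)} = 1$. -/
open Real Filter

/-- If each SNR singular value satisfies the implicit equation
with common constants `c₁, c₂, c₃` then the ratio of the largest to the
smallest tends to one. -/
theorem snr_singular_values_equalize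
    (C : ℕ) (hC : 2 ≤ C) [Nonempty (Fin (C - 1))]
    (c₁ c₂ c₃ : ℝ) (hc₁ : 0 < c₁) (hc₂ : 0 < c₂) (hc₃ : 0 < c₃)
    (a : Fin (C - 1) → ℝ)
    (ω : Fin (C - 1) → ℝ → ℝ)
    (hpos : ∀ j t, 0 ≤ t → 0 < ω j t)
    (heq : ∀ j t, 0 ≤ t →
      c₁ * Real.log (ω j t) + c₂ * (ω j t) ^ 2 + c₃ * (ω j t) ^ 4 = a j + t) :
    Tendsto (fun t => (⨆ j, ω j t) / (⨅ j, ω j t)) atTop (nhds 1) := by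
  obtain ⟨jM, hjM⟩ := Finite.exists_max a
  obtain ⟨jm, hjm⟩ := Finite.exists_min a
  have hc : (0:ℝ) < c₁ + c₂ + c₃ := by linarith
  set K : ℝ := (a jM - a jm) * (c₁ + c₂ + c₃) / c₃ with hK
  have hKnn : 0 ≤ K := by
    apply div_nonneg _ hc₃.le
    exact mul_nonneg (by linarith [hjm jM]) hc.le
  set T : ℝ := max 0 (c₂ + c₃ - a jm + 1) with hT
  -- For t ≥ T every ω j t ≥ 1
  have hT0 : (0:ℝ) ≤ T := le_max_left _ _
  have hone : ∀ j t, T ≤ t → 1 ≤ ω j t := by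
    intro j t ht
    have ht0 : 0 ≤ t := le_trans hT0 ht
    by_contra h
    push_neg at h
    have hw := hpos j t ht0
    have hlog : Real.log (ω j t) < 0 := Real.log_neg hw h
    have h2 : (ω j t) ^ 2 < 1 := by nlinarith
    have h4 : (ω j t) ^ 4 < 1 := by nlinarith
    have hLHS : c₁ * Real.log (ω j t) + c₂ * (ω j t) ^ 2 + c₃ * (ω j t) ^ 4 < c₂ + c₃ := by
      nlinarith
    have ht' : c₂ + c₃ - a jm + 1 ≤ t := le_trans (le_max_right _ _) ht
    have : a j + t ≥ c₂ + c₃ + 1 := by linarith [hjm j]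
    rw [heq j t ht0] at hLHS
    linarith
  -- lower bound on ω j t ^ 4
  have hlow : ∀ j t, T ≤ t → a jm + t ≤ (c₁ + c₂ + c₃) * (ω j t) ^ 4 := by
    intro j t ht
    have ht0 : 0 ≤ t := le_trans hT0 ht
    have h1 : 1 ≤ ω j t := hone j t ht
    have hw := hpos j t ht0
    have h14 : ω j t ^ 1 ≤ ω j t ^ 4 := pow_le_pow_right₀ h1 (by norm_num)
    have h2 : (ω j t) ^ 2 ≤ (ω j t) ^ 4 := pow_le_pow_right₀ h1 (by norm_num)
    have hlog : Real.log (ω j t) ≤ (ω j t) ^ 4 := by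
      have := Real.log_le_sub_one_of_pos hw
      nlinarith
    have := heq j t ht0
    have hja : a jm ≤ a j := hjm j
    nlinarith
  -- positivity of a jm + t for t ≥ T
  have hpt : ∀ t : ℝ, T ≤ t → 0 < a jm + t := by
    intro t ht
    have ht' : c₂ + c₃ - a jm + 1 ≤ t := le_trans (le_max_right _ _) ht
    linarith
  -- main squeeze bounds
  have hbound : ∀ t, T ≤ t →
      1 ≤ (⨆ j, ω j t) / (⨅ j, ω j t) ∧
      (⨆ j, ω j t) / (⨅ j, ω j t) ≤ 1 + K / (a jm + t) := by
    intro t ht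
    have ht0 : 0 ≤ t := le_trans hT0 ht
    obtain ⟨iM, hiM⟩ := Finite.exists_max (fun j => ω j t)
    obtain ⟨im, him⟩ := Finite.exists_min (fun j => ω j t)
    have hs : (⨆ j, ω j t) = ω iM t :=
      le_antisymm (ciSup_le fun j => hiM j) (le_ciSup (f := fun j => ω j t) (Set.finite_range _).bddAbove iM)
    have hi : (⨅ j, ω j t) = ω im t :=
      le_antisymm (ciInf_le (f := fun j => ω j t) (Set.finite_range _).bddBelow im) (le_ciInf fun j => him j)
    have h1M : 1 ≤ ω iM t := hone iM t ht
    have h1m : 1 ≤ ω im t := hone im t ht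
    have hmm : ω im t ≤ ω iM t := him iM
    have hM := heq iM t ht0
    have hm := heq im t ht0
    have hlogle : Real.log (ω im t) ≤ Real.log (ω iM t) :=
      Real.log_le_log (hpos im t ht0) hmm
    have hsq : (ω im t) ^ 2 ≤ (ω iM t) ^ 2 := by nlinarith
    -- c₃ (ωM⁴ - ωm⁴) ≤ a iM - a im ≤ a jM - a jm
    have hdiff : c₃ * ((ω iM t) ^ 4 - (ω im t) ^ 4) ≤ a jM - a jm := by
      have h1 : a iM ≤ a jM := hjM iM
      have h2 : a jm ≤ a im := hjm im
      nlinarith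
    have hwm4 : a jm + t ≤ (c₁ + c₂ + c₃) * (ω im t) ^ 4 := hlow im t ht
    have hpos4 : 0 < (ω im t) ^ 4 := by positivity
    have hpt' := hpt t ht
    rw [hs, hi]
    constructor
    · rw [le_div_iff₀ (by linarith : (0:ℝ) < ω im t)]
      linarith
    · have hrat1 : 1 ≤ ω iM t / ω im t := by
        rw [le_div_iff₀ (by linarith : (0:ℝ) < ω im t)]; linarith
      have hle4 : ω iM t / ω im t ≤ (ω iM t / ω im t) ^ 4 := by
        calc ω iM t / ω im t = (ω iM t / ω im t) ^ 1 := (pow_one _).symm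
          _ ≤ (ω iM t / ω im t) ^ 4 := pow_le_pow_right₀ hrat1 (by norm_num)
      have h4eq : (ω iM t / ω im t) ^ 4 = (ω iM t) ^ 4 / (ω im t) ^ 4 := by
        rw [div_pow]
      have hd1 : (ω iM t) ^ 4 ≤ (ω im t) ^ 4 + (a jM - a jm) / c₃ := by
        rw [← le_div_iff₀' hc₃] at hdiff
        linarith [hdiff]
      have hstep : (ω iM t) ^ 4 / (ω im t) ^ 4 ≤ 1 + (a jM - a jm) / (c₃ * (ω im t) ^ 4) := by
        calc (ω iM t) ^ 4 / (ω im t) ^ 4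
            ≤ ((ω im t) ^ 4 + (a jM - a jm) / c₃) / (ω im t) ^ 4 := by
              gcongr
          _ = 1 + (a jM - a jm) / c₃ / (ω im t) ^ 4 := by
              rw [add_div, div_self (ne_of_gt hpos4)]
          _ = 1 + (a jM - a jm) / (c₃ * (ω im t) ^ 4) := by rw [div_div]
      have hstep2 : (a jM - a jm) / (c₃ * (ω im t) ^ 4) ≤ K / (a jm + t) := by
        have hanm : 0 ≤ a jM - a jm := by linarith [hjm jM]
        rw [hK, div_le_div_iff₀ (by positivity) hpt']
        have heq2 : (a jM - a jm) * (c₁ + c₂ + c₃) / c₃ * (c₃ * (ω im t) ^ 4)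
            = (a jM - a jm) * ((c₁ + c₂ + c₃) * (ω im t) ^ 4) := by
          field_simp
        rw [heq2]
        exact mul_le_mul_of_nonneg_left hwm4 hanm
      calc ω iM t / ω im t ≤ (ω iM t / ω im t) ^ 4 := hle4
        _ = (ω iM t) ^ 4 / (ω im t) ^ 4 := h4eq
        _ ≤ 1 + (a jM - a jm) / (c₃ * (ω im t) ^ 4) := hstep
        _ ≤ 1 + K / (a jm + t) := by linarith
  -- squeeze
  have hlim : Tendsto (fun t : ℝ => 1 + K / (a jm + t)) atTop (nhds 1) := by
    have h1 : Tendsto (fun t : ℝ => a jm + t) atTop atTop :=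
      tendsto_atTop_add_const_left _ _ tendsto_id
    have h2 : Tendsto (fun t : ℝ => K / (a jm + t)) atTop (nhds 0) := by
      simpa [div_eq_mul_inv] using h1.inv_tendsto_atTop.const_mul K
    simpa using (tendsto_const_nhds (x := (1:ℝ))).add h2
  refine tendsto_of_tendsto_of_tendsto_of_le_of_le' tendsto_const_nhds hlim ?_ ?_
  · filter_upwards [eventually_ge_atTop T] with t ht using (hbound t ht).1
  · filter_upwards [eventually_ge_atTop T] with t ht using (hbound t ht).2
end

section
/- Let $X_0 \in \mathbb{R}^{C\times CN}$ satisfy $X_0 C X_0^\top = I$ for a symmetric positive-semidefinite matrix $C$. Then for a perturbation $\Delta$, the renormalized step satisfies $\big((X_0+\Delta)C(X_0+\Delta)^\top\big)^{-1/2}(X_0 + \Delta) = X_0 + \Pi(\Delta) + O(\|\Delta\|^2)$ as $\Delta \to 0$, where $\Pi(\Delta) = \Delta - \frac{1}{2}(\Delta C X_0^\top + X_0 C \Delta^\top)X_0$ is the projection onto the tangent space of $\{X : XCX^\top = I\}$ at $X_0$. -/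
open Matrix Asymptotics Filter

attribute [local instance] Matrix.normedAddCommGroup Matrix.normedSpace

lemma mnorm_mul_le {l m n : Type*} [Fintype l] [Fintype m] [Fintype n]
    (A : Matrix l m ℝ) (B : Matrix m n ℝ) :
    ‖A * B‖ ≤ (Fintype.card m : ℝ) * ‖A‖ * ‖B‖ := by
  refine (Matrix.norm_le_iff (by positivity)).2 fun i j => ?_
  calc ‖(A * B) i j‖ = |∑ k, A i k * B k j| := by
        simp [Matrix.mul_apply, Real.norm_eq_abs]
    _ ≤ ∑ k, |A i k * B k j| := Finset.abs_sum_le_sum_abs _ _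
    _ ≤ ∑ _k : m, ‖A‖ * ‖B‖ := by
        refine Finset.sum_le_sum fun k _ => ?_
        rw [abs_mul]
        exact mul_le_mul (by simpa [Real.norm_eq_abs] using A.norm_entry_le_entrywise_sup_norm (i := i) (j := k))
          (by simpa [Real.norm_eq_abs] using B.norm_entry_le_entrywise_sup_norm (i := k) (j := j))
          (abs_nonneg _) (norm_nonneg _)
    _ = (Fintype.card m : ℝ) * ‖A‖ * ‖B‖ := by
        rw [Finset.sum_const]; simp [mul_assoc]

lemma mtrace_nonneg_of_psd {l : Type*} [Fintype l] [DecidableEq l]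
    {P : Matrix l l ℝ} (hP : P.PosSemidef) : 0 ≤ P.trace := by
  rw [Matrix.trace]
  refine Finset.sum_nonneg fun i _ => ?_
  exact hP.diag_nonneg

lemma mnorm_one_le {l : Type*} [Fintype l] [DecidableEq l] :
    ‖(1 : Matrix l l ℝ)‖ ≤ 1 := by
  refine (Matrix.norm_le_iff zero_le_one).2 fun i j => ?_
  rw [Matrix.one_apply]
  split <;> simp

lemma mnorm_sub_one_le {k : Type*} [Fintype k] [DecidableEq k]
    {S : Matrix k k ℝ} (hsymm : S.IsSymm) (hpsd : S.PosSemidef) :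
    ‖S - 1‖ ≤ (Fintype.card k : ℝ) * ‖S * S - 1‖ := by
  set B := S - 1 with hBdef
  set D := S * S - 1 with hDdef
  have hsymm' : Sᵀ = S := hsymm
  have hBsymm : Bᵀ = B := by rw [hBdef, Matrix.transpose_sub, hsymm', Matrix.transpose_one]
  -- trace (B*B) = sum of squares
  have htrB : Matrix.trace (B * B) = ∑ i, ∑ j, (B i j) ^ 2 := by
    rw [Matrix.trace]
    refine Finset.sum_congr rfl fun i _ => ?_
    simp only [Matrix.diag, Matrix.mul_apply]
    refine Finset.sum_congr rfl fun j _ => ?_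
    have : B j i = B i j := by
      conv_lhs => rw [← hBsymm]
      rfl
    rw [sq, this]
  -- key identity
  have hid : D * D = B * B + (B * S) * (B * S) + ((B * S * B) + (B * S * B)) := by
    rw [hBdef, hDdef]; noncomm_ring
  have hQ : (B * S)ᴴ = B * S := by
    rw [Matrix.conjTranspose_eq_transpose_of_trivial, Matrix.transpose_mul, hsymm', hBsymm,
      hBdef]
    noncomm_ring
  have hQtr : 0 ≤ Matrix.trace ((B * S) * (B * S)) := by
    have := Matrix.posSemidef_conjTranspose_mul_self (B * S)
    rw [hQ] at this
    exact mtrace_nonneg_of_psd this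
  have hPtr : 0 ≤ Matrix.trace (B * S * B) := by
    have := hpsd.conjTranspose_mul_mul_same B
    rw [Matrix.conjTranspose_eq_transpose_of_trivial, hBsymm] at this
    exact mtrace_nonneg_of_psd this
  have htrle : Matrix.trace (B * B) ≤ Matrix.trace (D * D) := by
    rw [hid, Matrix.trace_add, Matrix.trace_add]
    have := mtrace_nonneg_of_psd (Matrix.posSemidef_conjTranspose_mul_self (B * S))
    rw [Matrix.trace_add] at *
    linarith
  have htrD : Matrix.trace (D * D) ≤ (Fintype.card k : ℝ) ^ 2 * ‖D‖ ^ 2 := by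
    rw [Matrix.trace]
    calc ∑ i, (D * D).diag i = ∑ i, ∑ j, D i j * D j i := by
          refine Finset.sum_congr rfl fun i _ => ?_
          simp [Matrix.diag, Matrix.mul_apply]
      _ ≤ ∑ _i : k, ∑ _j : k, ‖D‖ * ‖D‖ := by
          refine Finset.sum_le_sum fun i _ => Finset.sum_le_sum fun j _ => ?_
          calc D i j * D j i ≤ |D i j * D j i| := le_abs_self _
            _ = |D i j| * |D j i| := abs_mul _ _
            _ ≤ ‖D‖ * ‖D‖ := by
                exact mul_le_mul
                  (by simpa [Real.norm_eq_abs] using D.norm_entry_le_entrywise_sup_norm (i := i) (j := j))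
                  (by simpa [Real.norm_eq_abs] using D.norm_entry_le_entrywise_sup_norm (i := j) (j := i))
                  (abs_nonneg _) (norm_nonneg _)
      _ = (Fintype.card k : ℝ) ^ 2 * ‖D‖ ^ 2 := by
          simp [Finset.sum_const, sq]; ring
  refine (Matrix.norm_le_iff (by positivity)).2 fun i j => ?_
  have h1 : (B i j) ^ 2 ≤ Matrix.trace (B * B) := by
    rw [htrB]
    calc (B i j) ^ 2 ≤ ∑ j', (B i j') ^ 2 :=
          Finset.single_le_sum (f := fun j' => (B i j') ^ 2)
            (fun j' _ => sq_nonneg _) (Finset.mem_univ j)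
      _ ≤ ∑ i', ∑ j', (B i' j') ^ 2 :=
          Finset.single_le_sum (f := fun i' => ∑ j', (B i' j') ^ 2)
            (fun i' _ => Finset.sum_nonneg fun j' _ => sq_nonneg _)
            (Finset.mem_univ i)
  have h2 : (B i j) ^ 2 ≤ ((Fintype.card k : ℝ) * ‖D‖) ^ 2 := by
    calc (B i j) ^ 2 ≤ Matrix.trace (D * D) := le_trans h1 htrle
      _ ≤ (Fintype.card k : ℝ) ^ 2 * ‖D‖ ^ 2 := htrD
      _ = ((Fintype.card k : ℝ) * ‖D‖) ^ 2 := by ring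
  have hnn : (0:ℝ) ≤ (Fintype.card k : ℝ) * ‖D‖ := by positivity
  rw [Real.norm_eq_abs]
  nlinarith [abs_nonneg (B i j), sq_abs (B i j)]

set_option maxHeartbeats 1000000

/-- First-order equivalence of a renormalized step with a
tangent-space-projected step:
`((X₀+Δ)C(X₀+Δ)ᵀ)^{-1/2}(X₀+Δ) = X₀ + Π(Δ) + O(‖Δ‖²)` as `Δ → 0`. -/
theorem renormalized_step_first_order
    (C N : ℕ) (hC : 0 < C) (hN : 0 < N)
    (Cm : Matrix (Fin (C * N)) (Fin (C * N)) ℝ)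
    (hCsymm : Cm.IsSymm) (hCpsd : Cm.PosSemidef)
    (X₀ : Matrix (Fin C) (Fin (C * N)) ℝ)
    (hX₀ : X₀ * Cm * X₀ᵀ = 1)
    -- `S Δ` is the inverse positive-semidefinite square root
    -- `((X₀+Δ)C(X₀+Δ)ᵀ)^{-1/2}`, characterized near `Δ = 0` by the equation
    -- `S Δ * ((X₀+Δ)C(X₀+Δ)ᵀ) * S Δ = 1` with `S Δ` symmetric PSD
    (S : Matrix (Fin C) (Fin (C * N)) ℝ → Matrix (Fin C) (Fin C) ℝ)
    (hS : ∀ᶠ Δ in nhds (0 : Matrix (Fin C) (Fin (C * N)) ℝ),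
      (S Δ).IsSymm ∧ (S Δ).PosSemidef ∧
        S Δ * ((X₀ + Δ) * Cm * (X₀ + Δ)ᵀ) * S Δ = 1)
    (Pi : Matrix (Fin C) (Fin (C * N)) ℝ → Matrix (Fin C) (Fin (C * N)) ℝ)
    (hPi : ∀ Z, Pi Z = Z - ((1 : ℝ) / 2) • ((X₀ * Cm * Zᵀ + Z * Cm * X₀ᵀ) * X₀)) :
    (fun Δ : Matrix (Fin C) (Fin (C * N)) ℝ =>
        S Δ * (X₀ + Δ) - (X₀ + Pi Δ))
      =O[nhds 0] (fun Δ => ‖Δ‖ ^ 2) := by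
  obtain ⟨cC, hcC⟩ : ∃ x : ℝ, ((Fintype.card (Fin C) : ℝ)) = x := ⟨_, rfl⟩
  obtain ⟨cn, hcn⟩ : ∃ x : ℝ, ((Fintype.card (Fin (C * N)) : ℝ)) = x := ⟨_, rfl⟩
  have hcC1 : (1:ℝ) ≤ cC := by
    rw [← hcC]; simp only [Fintype.card_fin]; exact_mod_cast hC
  have hcn1 : (1:ℝ) ≤ cn := by
    rw [← hcn]; simp only [Fintype.card_fin]
    exact_mod_cast Nat.one_le_iff_ne_zero.2 (Nat.mul_ne_zero hC.ne' hN.ne')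
  have hcC0 : (0:ℝ) ≤ cC := by linarith
  have hcn0 : (0:ℝ) ≤ cn := by linarith
  obtain ⟨Ka, hKa⟩ : ∃ x : ℝ, cn ^ 2 * ‖Cm‖ * (2 * ‖X₀‖ + 1) + 1 = x := ⟨_, rfl⟩
  have hKapos : 0 < Ka := by rw [← hKa]; positivity
  obtain ⟨Kb, hKb⟩ : ∃ x : ℝ, 2 * cC ^ 2 * Ka = x := ⟨_, rfl⟩
  have hKbpos : 0 < Kb := by rw [← hKb]; positivity
  obtain ⟨KT, hKT⟩ : ∃ x : ℝ,
      (cC * Kb ^ 2 + 2 * cC * Kb * Ka + cC ^ 2 * Kb ^ 2 * Ka) / 2 = x := ⟨_, rfl⟩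
  have hKTpos : 0 < KT := by rw [← hKT]; positivity
  obtain ⟨K, hK⟩ : ∃ x : ℝ,
      cC * KT * ‖X₀‖ + cC * Kb + cC * cn ^ 2 * ‖Cm‖ * ‖X₀‖ + 1 = x := ⟨_, rfl⟩
  obtain ⟨δ, hδdef⟩ : ∃ x : ℝ, min 1 (1 / (2 * (cC + 1) * Ka)) = x := ⟨_, rfl⟩
  have hδpos : 0 < δ := by rw [← hδdef]; exact lt_min one_pos (by positivity)
  rw [Asymptotics.isBigO_iff]
  refine ⟨K, ?_⟩
  have hball : ∀ᶠ Δ in nhds (0 : Matrix (Fin C) (Fin (C * N)) ℝ), ‖Δ‖ < δ := by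
    filter_upwards [Metric.ball_mem_nhds (0 : Matrix (Fin C) (Fin (C * N)) ℝ) hδpos] with Δ h
    simpa [dist_zero_right] using h
  filter_upwards [hS, hball] with Δ hSΔ hΔδ
  obtain ⟨hsym, hpsd, heq⟩ := hSΔ
  have hΔ1 : ‖Δ‖ ≤ 1 := by
    have := min_le_left (1:ℝ) (1 / (2 * (cC + 1) * Ka))
    rw [hδdef] at this; linarith
  have h0Δ : (0:ℝ) ≤ ‖Δ‖ := norm_nonneg _
  have h0X : (0:ℝ) ≤ ‖X₀‖ := norm_nonneg _
  have h0C : (0:ℝ) ≤ ‖Cm‖ := norm_nonneg _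
  set A := X₀ * Cm * Δᵀ + Δ * Cm * X₀ᵀ + Δ * Cm * Δᵀ with hAdef
  have h0A : (0:ℝ) ≤ ‖A‖ := norm_nonneg _
  -- bound on A
  have hb1 : ‖X₀ * Cm * Δᵀ‖ ≤ cn * cn * ‖X₀‖ * ‖Cm‖ * ‖Δ‖ := by
    have t1 : ‖X₀ * Cm * Δᵀ‖ ≤ cn * ‖X₀ * Cm‖ * ‖Δᵀ‖ := by
      have := mnorm_mul_le (X₀ * Cm) Δᵀ; rwa [hcn] at this
    have t2 : ‖X₀ * Cm‖ ≤ cn * ‖X₀‖ * ‖Cm‖ := by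
      have := mnorm_mul_le X₀ Cm; rwa [hcn] at this
    rw [Matrix.norm_transpose] at t1
    calc ‖X₀ * Cm * Δᵀ‖ ≤ cn * ‖X₀ * Cm‖ * ‖Δ‖ := t1
      _ ≤ cn * (cn * ‖X₀‖ * ‖Cm‖) * ‖Δ‖ := by
          have := mul_le_mul_of_nonneg_left t2 hcn0
          exact mul_le_mul_of_nonneg_right this h0Δ
      _ = cn * cn * ‖X₀‖ * ‖Cm‖ * ‖Δ‖ := by ring
  have hb2 : ‖Δ * Cm * X₀ᵀ‖ ≤ cn * cn * ‖X₀‖ * ‖Cm‖ * ‖Δ‖ := by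
    have t1 : ‖Δ * Cm * X₀ᵀ‖ ≤ cn * ‖Δ * Cm‖ * ‖X₀ᵀ‖ := by
      have := mnorm_mul_le (Δ * Cm) X₀ᵀ; rwa [hcn] at this
    have t2 : ‖Δ * Cm‖ ≤ cn * ‖Δ‖ * ‖Cm‖ := by
      have := mnorm_mul_le Δ Cm; rwa [hcn] at this
    rw [Matrix.norm_transpose] at t1
    calc ‖Δ * Cm * X₀ᵀ‖ ≤ cn * ‖Δ * Cm‖ * ‖X₀‖ := t1
      _ ≤ cn * (cn * ‖Δ‖ * ‖Cm‖) * ‖X₀‖ := by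
          have := mul_le_mul_of_nonneg_left t2 hcn0
          exact mul_le_mul_of_nonneg_right this h0X
      _ = cn * cn * ‖X₀‖ * ‖Cm‖ * ‖Δ‖ := by ring
  have hb3' : ‖Δ * Cm * Δᵀ‖ ≤ cn * cn * ‖Cm‖ * (‖Δ‖ * ‖Δ‖) := by
    have t1 : ‖Δ * Cm * Δᵀ‖ ≤ cn * ‖Δ * Cm‖ * ‖Δᵀ‖ := by
      have := mnorm_mul_le (Δ * Cm) Δᵀ; rwa [hcn] at this
    have t2 : ‖Δ * Cm‖ ≤ cn * ‖Δ‖ * ‖Cm‖ := by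
      have := mnorm_mul_le Δ Cm; rwa [hcn] at this
    rw [Matrix.norm_transpose] at t1
    calc ‖Δ * Cm * Δᵀ‖ ≤ cn * ‖Δ * Cm‖ * ‖Δ‖ := t1
      _ ≤ cn * (cn * ‖Δ‖ * ‖Cm‖) * ‖Δ‖ := by
          have := mul_le_mul_of_nonneg_left t2 hcn0
          exact mul_le_mul_of_nonneg_right this h0Δ
      _ = cn * cn * ‖Cm‖ * (‖Δ‖ * ‖Δ‖) := by ring
  have hb3 : ‖Δ * Cm * Δᵀ‖ ≤ cn * cn * ‖Cm‖ * ‖Δ‖ := by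
    have h : cn * cn * ‖Cm‖ * (‖Δ‖ * ‖Δ‖) ≤ cn * cn * ‖Cm‖ * (‖Δ‖ * 1) := by
      have h' : ‖Δ‖ * ‖Δ‖ ≤ ‖Δ‖ * 1 := mul_le_mul_of_nonneg_left hΔ1 h0Δ
      exact mul_le_mul_of_nonneg_left h' (by positivity)
    calc ‖Δ * Cm * Δᵀ‖ ≤ cn * cn * ‖Cm‖ * (‖Δ‖ * ‖Δ‖) := hb3'
      _ ≤ cn * cn * ‖Cm‖ * (‖Δ‖ * 1) := h
      _ = cn * cn * ‖Cm‖ * ‖Δ‖ := by ring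
  have htriA : ‖A‖ ≤ ‖X₀ * Cm * Δᵀ‖ + ‖Δ * Cm * X₀ᵀ‖ + ‖Δ * Cm * Δᵀ‖ := by
    rw [hAdef]
    exact le_trans (norm_add_le _ _) (by gcongr; exact norm_add_le _ _)
  have hnA : ‖A‖ ≤ Ka * ‖Δ‖ := by
    rw [← hKa]
    have h : (cn ^ 2 * ‖Cm‖ * (2 * ‖X₀‖ + 1) + 1) * ‖Δ‖
        = cn * cn * ‖X₀‖ * ‖Cm‖ * ‖Δ‖ + cn * cn * ‖X₀‖ * ‖Cm‖ * ‖Δ‖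
          + cn * cn * ‖Cm‖ * ‖Δ‖ + ‖Δ‖ := by ring
    rw [h]
    linarith [hb1, hb2, hb3, htriA]
  have hnAKa : ‖A‖ ≤ Ka := by
    have := mul_le_mul_of_nonneg_left hΔ1 hKapos.le
    rw [mul_one] at this
    linarith
  -- smallness
  have hAsmall : cC * ‖A‖ ≤ 1 / 2 := by
    have hδ2 : ‖Δ‖ ≤ 1 / (2 * (cC + 1) * Ka) := by
      have := min_le_right (1:ℝ) (1 / (2 * (cC + 1) * Ka))
      rw [hδdef] at this; linarith
    have h1 : ‖A‖ ≤ Ka * (1 / (2 * (cC + 1) * Ka)) :=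
      le_trans hnA (mul_le_mul_of_nonneg_left hδ2 hKapos.le)
    have h2 : Ka * (1 / (2 * (cC + 1) * Ka)) = 1 / (2 * (cC + 1)) := by
      field_simp
    rw [h2] at h1
    have h3 : ‖A‖ * (2 * (cC + 1)) ≤ 1 := by
      rw [le_div_iff₀ (by positivity)] at h1; linarith
    nlinarith [h3, h0A]
  -- square equation
  have hM : (X₀ + Δ) * Cm * (X₀ + Δ)ᵀ = 1 + A := by
    rw [hAdef]
    simp only [Matrix.transpose_add, Matrix.add_mul, Matrix.mul_add]
    rw [hX₀]
    abel
  have hexp : S Δ * S Δ * (1 + A) = 1 := by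
    rw [hM] at heq
    have h1 : S Δ * ((1 + A) * S Δ) = 1 := by rw [← Matrix.mul_assoc]; exact heq
    have h2 : (1 + A) * S Δ * S Δ = 1 := mul_eq_one_comm.1 h1
    have h3 : (1 + A) * (S Δ * S Δ) = 1 := by rw [← Matrix.mul_assoc]; exact h2
    exact mul_eq_one_comm.1 h3
  set B := S Δ - 1 with hBdef
  set T := B + (1 / 2 : ℝ) • A with hTdef
  have h0B : (0:ℝ) ≤ ‖B‖ := norm_nonneg _
  -- norm of S*S
  have hSSid : S Δ * S Δ = 1 - S Δ * S Δ * A := by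
    have h := hexp
    rw [Matrix.mul_add, Matrix.mul_one] at h
    exact eq_sub_of_add_eq h
  have h0SS : (0:ℝ) ≤ ‖S Δ * S Δ‖ := norm_nonneg _
  have hmulSSA : ‖S Δ * S Δ * A‖ ≤ cC * ‖S Δ * S Δ‖ * ‖A‖ := by
    have := mnorm_mul_le (S Δ * S Δ) A; rwa [hcC] at this
  have hSS2 : ‖S Δ * S Δ‖ ≤ 2 := by
    have h1 : ‖S Δ * S Δ‖ ≤ ‖(1 : Matrix (Fin C) (Fin C) ℝ)‖ + ‖S Δ * S Δ * A‖ := by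
      conv_lhs => rw [hSSid]
      exact norm_sub_le _ _
    have h3 := mnorm_one_le (l := Fin C)
    have h4 : cC * ‖A‖ * ‖S Δ * S Δ‖ ≤ (1/2) * ‖S Δ * S Δ‖ :=
      mul_le_mul_of_nonneg_right hAsmall h0SS
    nlinarith [h1, h3, h4, hmulSSA]
  have hSS1 : ‖S Δ * S Δ - 1‖ ≤ 2 * cC * ‖A‖ := by
    have hid2 : S Δ * S Δ - 1 = -(S Δ * S Δ * A) := by
      conv_lhs => rw [hSSid]
      abel
    rw [hid2, norm_neg]
    have h5 : cC * ‖A‖ * ‖S Δ * S Δ‖ ≤ cC * ‖A‖ * 2 :=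
      mul_le_mul_of_nonneg_left hSS2 (by positivity)
    nlinarith [hmulSSA, h5]
  have hBle : ‖B‖ ≤ Kb * ‖Δ‖ := by
    have h1 : ‖B‖ ≤ cC * ‖S Δ * S Δ - 1‖ := by
      have := mnorm_sub_one_le hsym hpsd
      rw [hcC] at this; exact this
    have h2 : cC * ‖S Δ * S Δ - 1‖ ≤ cC * (2 * cC * ‖A‖) :=
      mul_le_mul_of_nonneg_left hSS1 hcC0
    have h3 : cC * (2 * cC * ‖A‖) ≤ cC * (2 * cC * (Ka * ‖Δ‖)) := by
      have := mul_le_mul_of_nonneg_left hnA (by positivity : (0:ℝ) ≤ 2 * cC)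
      exact mul_le_mul_of_nonneg_left this hcC0
    have h4 : cC * (2 * cC * (Ka * ‖Δ‖)) = (2 * cC ^ 2 * Ka) * ‖Δ‖ := by ring
    rw [← hKb, ← h4]
    linarith [h1, h2, h3]
  have hBKb : ‖B‖ ≤ Kb := by
    have := mul_le_mul_of_nonneg_left hΔ1 hKbpos.le
    rw [mul_one] at this
    linarith
  -- key algebraic identity
  have hkey : B * B + B * A + B * A + B * B * A + (B + B) + A = 0 := by
    have h : S Δ * S Δ * (1 + A) - 1 = 0 := sub_eq_zero.mpr hexp
    calc B * B + B * A + B * A + B * B * A + (B + B) + A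
        = S Δ * S Δ * (1 + A) - 1 := by rw [hBdef]; noncomm_ring
      _ = 0 := h
  have h2T : (2 : ℝ) • T = -(B * B + B * A + B * A + B * B * A) := by
    have h : (B * B + B * A + B * A + B * B * A) + (B + B + A) = 0 := by
      calc (B * B + B * A + B * A + B * B * A) + (B + B + A)
          = B * B + B * A + B * A + B * B * A + (B + B) + A := by abel
        _ = 0 := hkey
    have h' : -(B * B + B * A + B * A + B * B * A) = B + B + A :=
      neg_eq_of_add_eq_zero_right h
    rw [h', hTdef]
    module
  have hTle : ‖T‖ ≤ KT * ‖Δ‖ ^ 2 := by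
    have hnorm2T : ‖(2:ℝ) • T‖ = 2 * ‖T‖ := by rw [norm_smul]; simp
    have hBB : ‖B * B‖ ≤ cC * ‖B‖ * ‖B‖ := by
      have := mnorm_mul_le B B; rwa [hcC] at this
    have hBA : ‖B * A‖ ≤ cC * ‖B‖ * ‖A‖ := by
      have := mnorm_mul_le B A; rwa [hcC] at this
    have hBBA : ‖B * B * A‖ ≤ cC * ‖B * B‖ * ‖A‖ := by
      have := mnorm_mul_le (B * B) A; rwa [hcC] at this
    have htri : ‖(2:ℝ) • T‖ ≤ ‖B * B‖ + ‖B * A‖ + ‖B * A‖ + ‖B * B * A‖ := by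
      rw [h2T, norm_neg]
      calc ‖B * B + B * A + B * A + B * B * A‖
          ≤ ‖B * B + B * A + B * A‖ + ‖B * B * A‖ := norm_add_le _ _
        _ ≤ ‖B * B + B * A‖ + ‖B * A‖ + ‖B * B * A‖ := by
            gcongr; exact norm_add_le _ _
        _ ≤ ‖B * B‖ + ‖B * A‖ + ‖B * A‖ + ‖B * B * A‖ := by
            gcongr; exact norm_add_le _ _
    have q1 : ‖B‖ * ‖B‖ ≤ (Kb * ‖Δ‖) * (Kb * ‖Δ‖) :=
      mul_le_mul hBle hBle h0B (by positivity)
    have q2 : ‖B‖ * ‖A‖ ≤ (Kb * ‖Δ‖) * (Ka * ‖Δ‖) :=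
      mul_le_mul hBle hnA h0A (by positivity)
    have e1 : ‖B * B‖ ≤ cC * Kb ^ 2 * ‖Δ‖ ^ 2 := by
      have h := mul_le_mul_of_nonneg_left q1 hcC0
      have h' : cC * ((Kb * ‖Δ‖) * (Kb * ‖Δ‖)) = cC * Kb ^ 2 * ‖Δ‖ ^ 2 := by ring
      rw [h'] at h
      have h'' : cC * (‖B‖ * ‖B‖) = cC * ‖B‖ * ‖B‖ := by ring
      rw [h''] at h
      linarith [hBB]
    have e2 : ‖B * A‖ ≤ cC * Kb * Ka * ‖Δ‖ ^ 2 := by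
      have h := mul_le_mul_of_nonneg_left q2 hcC0
      have h' : cC * ((Kb * ‖Δ‖) * (Ka * ‖Δ‖)) = cC * Kb * Ka * ‖Δ‖ ^ 2 := by ring
      rw [h'] at h
      have h'' : cC * (‖B‖ * ‖A‖) = cC * ‖B‖ * ‖A‖ := by ring
      rw [h''] at h
      linarith [hBA]
    have q3 : ‖B * B‖ * ‖A‖ ≤ (cC * Kb ^ 2 * ‖Δ‖ ^ 2) * Ka :=
      mul_le_mul e1 hnAKa h0A (by positivity)
    have e3 : ‖B * B * A‖ ≤ cC ^ 2 * Kb ^ 2 * Ka * ‖Δ‖ ^ 2 := by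
      have h := mul_le_mul_of_nonneg_left q3 hcC0
      have h' : cC * ((cC * Kb ^ 2 * ‖Δ‖ ^ 2) * Ka) = cC ^ 2 * Kb ^ 2 * Ka * ‖Δ‖ ^ 2 := by
        ring
      rw [h'] at h
      have h'' : cC * (‖B * B‖ * ‖A‖) = cC * ‖B * B‖ * ‖A‖ := by ring
      rw [h''] at h
      linarith [hBBA]
    have hKT' : KT * ‖Δ‖ ^ 2 = (cC * Kb ^ 2 * ‖Δ‖ ^ 2 + 2 * (cC * Kb * Ka * ‖Δ‖ ^ 2)
        + cC ^ 2 * Kb ^ 2 * Ka * ‖Δ‖ ^ 2) / 2 := by rw [← hKT]; ring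
    rw [hKT']
    linarith [htri, hnorm2T, e1, e2, e3]
  -- final identity
  have hfinal : S Δ * (X₀ + Δ) - (X₀ + Pi Δ)
      = T * X₀ + B * Δ - (1 / 2 : ℝ) • (Δ * Cm * Δᵀ * X₀) := by
    rw [hPi, hTdef, hBdef, hAdef]
    simp only [Matrix.add_mul, Matrix.sub_mul, Matrix.mul_add, Matrix.one_mul,
      Matrix.smul_mul, smul_add, smul_sub]
    abel
  rw [hfinal]
  have hnormsq : ‖(‖Δ‖ ^ 2 : ℝ)‖ = ‖Δ‖ ^ 2 := by
    rw [Real.norm_eq_abs, abs_of_nonneg (by positivity)]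
  rw [hnormsq]
  have hTX : ‖T * X₀‖ ≤ cC * ‖T‖ * ‖X₀‖ := by
    have := mnorm_mul_le T X₀; rwa [hcC] at this
  have hBΔ : ‖B * Δ‖ ≤ cC * ‖B‖ * ‖Δ‖ := by
    have := mnorm_mul_le B Δ; rwa [hcC] at this
  have hQX : ‖Δ * Cm * Δᵀ * X₀‖ ≤ cC * ‖Δ * Cm * Δᵀ‖ * ‖X₀‖ := by
    have := mnorm_mul_le (Δ * Cm * Δᵀ) X₀; rwa [hcC] at this
  have htri2 : ‖T * X₀ + B * Δ - (1 / 2 : ℝ) • (Δ * Cm * Δᵀ * X₀)‖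
      ≤ ‖T * X₀‖ + ‖B * Δ‖ + (1/2) * ‖Δ * Cm * Δᵀ * X₀‖ := by
    calc ‖T * X₀ + B * Δ - (1 / 2 : ℝ) • (Δ * Cm * Δᵀ * X₀)‖
        ≤ ‖T * X₀ + B * Δ‖ + ‖(1 / 2 : ℝ) • (Δ * Cm * Δᵀ * X₀)‖ := norm_sub_le _ _
      _ ≤ ‖T * X₀‖ + ‖B * Δ‖ + (1/2) * ‖Δ * Cm * Δᵀ * X₀‖ := by
          rw [norm_smul]
          have := norm_add_le (T * X₀) (B * Δ)
          have h9 : ‖(1/2 : ℝ)‖ = (1/2 : ℝ) := by norm_num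
          rw [h9]; linarith
  have r1 : cC * ‖T‖ * ‖X₀‖ ≤ cC * (KT * ‖Δ‖ ^ 2) * ‖X₀‖ := by
    have := mul_le_mul_of_nonneg_left hTle hcC0
    exact mul_le_mul_of_nonneg_right this h0X
  have r2 : cC * ‖B‖ * ‖Δ‖ ≤ cC * (Kb * ‖Δ‖) * ‖Δ‖ := by
    have := mul_le_mul_of_nonneg_left hBle hcC0
    exact mul_le_mul_of_nonneg_right this h0Δ
  have r3 : cC * ‖Δ * Cm * Δᵀ‖ * ‖X₀‖ ≤ cC * (cn * cn * ‖Cm‖ * (‖Δ‖ * ‖Δ‖)) * ‖X₀‖ := by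
    have := mul_le_mul_of_nonneg_left hb3' hcC0
    exact mul_le_mul_of_nonneg_right this h0X
  have h0T : (0:ℝ) ≤ ‖T‖ := norm_nonneg _
  have h0Q : (0:ℝ) ≤ ‖Δ * Cm * Δᵀ * X₀‖ := norm_nonneg _
  have h0Q2 : (0:ℝ) ≤ ‖Δ * Cm * Δᵀ‖ := norm_nonneg _
  have hm : (0:ℝ) ≤ cC * (cn * cn * ‖Cm‖ * (‖Δ‖ * ‖Δ‖)) * ‖X₀‖ := by positivity
  have hK' : K * ‖Δ‖ ^ 2 = cC * (KT * ‖Δ‖ ^ 2) * ‖X₀‖ + cC * (Kb * ‖Δ‖) * ‖Δ‖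
      + cC * (cn * cn * ‖Cm‖ * (‖Δ‖ * ‖Δ‖)) * ‖X₀‖ + ‖Δ‖ ^ 2 := by
    rw [← hK]; ring
  rw [hK']
  linarith [htri2, hTX, hBΔ, hQX, r1, r2, r3, sq_nonneg ‖Δ‖, hm, h0Q]
end
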